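/- Let t ≥ 1 and n ≥ 2t be integers, and let k₊ ≥ k₋ ≥ 0 be integers. If there exists a lattice Λ ⊆ ℤⁿ (an additive subgroup of ℤⁿ) such that the error-ball B(n,t,k₊,k₋) tiles ℤⁿ by Λ, then, as real numbers, (k₋+1)² / (k₊+k₋+1) < C(n,t)^{1/t}. -/
import Mathlib


open Finset

/-- Hamming weight of an integer vector: the number of nonzero entries. -/
def wt {n : ℕ} (x : Fin n → ℤ) : ℕ := (Finset.univ.filter (fun i => x i ≠ 0)).card

/-- The `(n,t,k₊,k₋)`-error-ball in `ℤⁿ`. -/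
def errBall (n t : ℕ) (kp km : ℤ) : Set (Fin n → ℤ) :=
  {x | (∀ i, -km ≤ x i ∧ x i ≤ kp) ∧ wt x ≤ t}

/-- `Tiles B T` : every `z ∈ ℤⁿ` is uniquely `z = v + b` with `v ∈ T` and `b ∈ B`. -/
def Tiles {n : ℕ} (B T : Set (Fin n → ℤ)) : Prop :=
  ∀ z : Fin n → ℤ, ∃! p : (Fin n → ℤ) × (Fin n → ℤ),
    p.1 ∈ T ∧ p.2 ∈ B ∧ z = p.1 + p.2

private lemma card_filter_val_lt (n m : ℕ) :
    (univ.filter fun i : Fin n => (i : ℕ) < m).card ≤ m := by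
  have h := Finset.card_le_card_of_injOn (s := univ.filter fun i : Fin n => (i : ℕ) < m)
    (t := Finset.range m) (fun i : Fin n => (i : ℕ))
    (by intro a ha; simp at ha ⊢; exact ha)
    (fun a _ b _ h => Fin.val_injective h)
  simpa using h

private lemma card_filter_val_Ico (n a b : ℕ) :
    (univ.filter fun i : Fin n => a ≤ (i : ℕ) ∧ (i : ℕ) < b).card ≤ b - a := by
  have h := Finset.card_le_card_of_injOn (s := univ.filter fun i : Fin n => a ≤ (i : ℕ) ∧ (i : ℕ) < b)
    (t := Finset.Ico a b) (fun i : Fin n => (i : ℕ))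
    (by intro x hx; simp at hx ⊢; exact hx)
    (fun x _ y _ h => Fin.val_injective h)
  simpa using h

private lemma tiles_lam_zero {n : ℕ} {B : Set (Fin n → ℤ)} {Λ : AddSubgroup (Fin n → ℤ)}
    (hT : Tiles B (Λ : Set (Fin n → ℤ))) {l b1 b2 : Fin n → ℤ}
    (hl : l ∈ Λ) (h1 : b1 ∈ B) (h2 : b2 ∈ B) (heq : b1 = l + b2) : l = 0 := by
  have h := (hT b1).unique (y₁ := (l, b2)) (y₂ := ((0 : Fin n → ℤ), b1))
    ⟨hl, h2, heq⟩ ⟨Λ.zero_mem, h1, by simp⟩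
  exact congrArg Prod.fst h

theorem stmt_8 (n t : ℕ) (kp km : ℤ) (ht : 1 ≤ t) (hn : 2 * t ≤ n)
    (hkm : 0 ≤ km) (hkp : km ≤ kp)
    (hex : ∃ Λ : AddSubgroup (Fin n → ℤ),
      Tiles (errBall n t kp km) (Λ : Set (Fin n → ℤ))) :
    ((km : ℝ) + 1) ^ 2 / ((kp : ℝ) + (km : ℝ) + 1) <
      ((n.choose t : ℝ)) ^ ((1 : ℝ) / (t : ℝ)) := by
  obtain ⟨Λ, hT⟩ := hex
  have htn : t < n := by omega
  -- Finset version of the ball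
  set BF : Finset (Fin n → ℤ) :=
    (Fintype.piFinset fun _ : Fin n => Finset.Icc (-km) kp).filter (fun x => wt x ≤ t) with hBFdef
  have hBF : ∀ x, x ∈ BF ↔ x ∈ errBall n t kp km := by
    intro x
    simp [hBFdef, errBall, Fintype.mem_piFinset, Finset.mem_Icc, Set.mem_setOf_eq,
      Finset.mem_filter]
  have hzero : (0 : Fin n → ℤ) ∈ BF := by
    rw [hBF]
    refine ⟨fun i => ?_, by simp [wt]⟩
    simp only [Pi.zero_apply]
    omega
  ------------------------------------------------------------------
  -- Upper bound : BF.card + 1 ≤ n.choose t * c ^ t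
  ------------------------------------------------------------------
  set c : ℕ := (Finset.Icc (-km) kp).card with hcdef
  have hc : (c : ℤ) = kp + km + 1 := by
    rw [hcdef, Int.card_Icc, Int.toNat_of_nonneg (by omega)]; ring
  set Q : Finset ((_ : Finset (Fin n)) × (Fin n → ℤ)) :=
    (univ.powersetCard t).sigma (fun T : Finset (Fin n) =>
      Fintype.piFinset (fun i => if i ∈ T then Finset.Icc (-km) kp else {0})) with hQdef
  have hQcard : Q.card = n.choose t * c ^ t := by
    rw [hQdef, Finset.card_sigma]
    have hconst : ∀ T ∈ (univ : Finset (Fin n)).powersetCard t,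
        (Fintype.piFinset (fun i : Fin n =>
          if i ∈ T then Finset.Icc (-km) kp else ({0} : Finset ℤ))).card
          = c ^ t := by
      intro T hTm
      have hTc : T.card = t := (Finset.mem_powersetCard.mp hTm).2
      rw [Fintype.card_piFinset]
      calc ∏ i : Fin n, (if i ∈ T then Finset.Icc (-km) kp else {0}).card
          = ∏ i : Fin n, (if i ∈ T then c else 1) := by
            refine Finset.prod_congr rfl fun i _ => ?_
            split <;> simp [hcdef]
        _ = ∏ _i ∈ univ ∩ T, c := Finset.prod_ite_mem _ _ _
        _ = c ^ t := by rw [Finset.univ_inter, Finset.prod_const, hTc]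
    rw [Finset.sum_congr rfl hconst, Finset.sum_const, Finset.card_powersetCard,
      Finset.card_univ, Fintype.card_fin, smul_eq_mul]
  -- choice of a covering support set of size t
  have hsupp : ∀ b, b ∈ BF → ∃ T : Finset (Fin n),
      (univ.filter fun i => b i ≠ 0) ⊆ T ∧ T ⊆ univ ∧ T.card = t := by
    intro b hb
    refine Finset.exists_subsuperset_card_eq (Finset.subset_univ _) ?_ ?_
    · exact (Finset.mem_filter.mp hb).2
    · simpa using le_of_lt htn
  classical
  set Tsel : (Fin n → ℤ) → Finset (Fin n) :=
    fun b => if hb : b ∈ BF then (hsupp b hb).choose else ∅ with hTseldef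
  have hTsel : ∀ b (hb : b ∈ BF),
      (univ.filter fun i => b i ≠ 0) ⊆ Tsel b ∧ Tsel b ⊆ univ ∧ (Tsel b).card = t := by
    intro b hb
    rw [hTseldef]
    simp only [dif_pos hb]
    exact (hsupp b hb).choose_spec
  set ι : (Fin n → ℤ) → ((_ : Finset (Fin n)) × (Fin n → ℤ)) := fun b => ⟨Tsel b, b⟩ with hιdef
  have hιmem : ∀ b ∈ BF, ι b ∈ Q := by
    intro b hb
    obtain ⟨hs, _, hcard⟩ := hTsel b hb
    rw [hQdef, Finset.mem_sigma]
    constructor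
    · exact Finset.mem_powersetCard.mpr ⟨Finset.subset_univ _, hcard⟩
    · rw [Fintype.mem_piFinset]
      intro i
      by_cases hi : i ∈ Tsel b
      · rw [if_pos hi, Finset.mem_Icc]
        have := (hBF b).mp hb
        exact this.1 i
      · rw [if_neg hi, Finset.mem_singleton]
        by_contra hne
        exact hi (hs (Finset.mem_filter.mpr ⟨Finset.mem_univ i, hne⟩))
  have hιinj : Set.InjOn ι (BF : Set (Fin n → ℤ)) := by
    intro a _ b _ h
    exact congrArg Sigma.snd h
  -- the missed element ⟨T', 0⟩
  have hT0card : (Tsel 0).card = t := (hTsel 0 hzero).2.2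
  have hT0ne : Tsel 0 ≠ univ := by
    intro h
    rw [h, Finset.card_univ, Fintype.card_fin] at hT0card
    omega
  obtain ⟨j, _, hj2⟩ := Finset.exists_of_ssubset
    (Finset.ssubset_univ_iff.mpr hT0ne)
  obtain ⟨i0, hi0⟩ := Finset.card_pos.mp (by rw [hT0card]; omega)
  set T' : Finset (Fin n) := insert j ((Tsel 0).erase i0) with hT'def
  have hjT' : j ∉ (Tsel 0).erase i0 := fun h => hj2 (Finset.mem_of_mem_erase h)
  have hT'card : T'.card = t := by
    rw [hT'def, Finset.card_insert_of_notMem hjT', Finset.card_erase_of_mem hi0, hT0card]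
    omega
  have hT'ne : T' ≠ Tsel 0 := by
    intro h
    exact hj2 (h ▸ Finset.mem_insert_self j _)
  have hT'Q : (⟨T', (0 : Fin n → ℤ)⟩ : (_ : Finset (Fin n)) × (Fin n → ℤ)) ∈ Q := by
    rw [hQdef, Finset.mem_sigma]
    refine ⟨Finset.mem_powersetCard.mpr ⟨Finset.subset_univ _, hT'card⟩, ?_⟩
    rw [Fintype.mem_piFinset]
    intro i
    by_cases hi : i ∈ T'
    · simp [hi]
      omega
    · simp [hi]
  have hT'nimg : (⟨T', (0 : Fin n → ℤ)⟩ : (_ : Finset (Fin n)) × (Fin n → ℤ)) ∉ BF.image ι := by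
    intro h
    obtain ⟨b, hb, heq⟩ := Finset.mem_image.mp h
    have hb0 : b = 0 := congrArg Sigma.snd heq
    subst hb0
    have h0 : Tsel 0 = T' := congrArg Sigma.fst heq
    exact hT'ne h0.symm
  have hupper : BF.card + 1 ≤ n.choose t * c ^ t := by
    have hsub : insert (⟨T', (0 : Fin n → ℤ)⟩ : (_ : Finset (Fin n)) × (Fin n → ℤ))
        (BF.image ι) ⊆ Q := by
      intro x hx
      rcases Finset.mem_insert.mp hx with h | h
      · exact h ▸ hT'Q
      · obtain ⟨b, hb, heq⟩ := Finset.mem_image.mp h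
        exact heq ▸ hιmem b hb
    calc BF.card + 1 = (insert (⟨T', (0 : Fin n → ℤ)⟩ : (_ : Finset (Fin n)) × (Fin n → ℤ))
          (BF.image ι)).card := by
          rw [Finset.card_insert_of_notMem hT'nimg, Finset.card_image_of_injOn hιinj]
      _ ≤ Q.card := Finset.card_le_card hsub
      _ = n.choose t * c ^ t := hQcard
  ------------------------------------------------------------------
  -- Lower bound : (km+1).toNat ^ (2*t) ≤ BF.card
  ------------------------------------------------------------------
  set G : Finset (Fin (2 * t) → ℤ) :=
    Fintype.piFinset (fun _ : Fin (2 * t) => Finset.Icc (0 : ℤ) km) with hGdef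
  have hGcard : G.card = (km + 1).toNat ^ (2 * t) := by
    rw [hGdef, Fintype.card_piFinset]
    simp [Int.card_Icc]
  set emb : (Fin (2 * t) → ℤ) → (Fin n → ℤ) :=
    fun g i => if h : (i : ℕ) < 2 * t then g ⟨i, h⟩ else 0 with hembdef
  have hembinj : Function.Injective emb := by
    intro g1 g2 h
    funext j
    have hjn : (j : ℕ) < n := lt_of_lt_of_le j.2 hn
    have := congrFun h ⟨j, hjn⟩
    simpa [hembdef, j.2] using this
  -- decomposition via tiling
  have hdec : ∀ x : Fin n → ℤ, ∃ p : (Fin n → ℤ) × (Fin n → ℤ),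
      p.1 ∈ Λ ∧ p.2 ∈ errBall n t kp km ∧ x = p.1 + p.2 := fun x => (hT x).exists
  set ψ : (Fin (2 * t) → ℤ) → (Fin n → ℤ) := fun g => (hdec (emb g)).choose.2 with hψdef
  have hψmem : ∀ g ∈ G, ψ g ∈ BF := by
    intro g _
    exact (hBF _).mpr (hdec (emb g)).choose_spec.2.1
  have hψinj : Set.InjOn ψ (G : Set (Fin (2 * t) → ℤ)) := by
    intro g1 hg1 g2 hg2 heq
    set p1 := (hdec (emb g1)).choose with hp1
    set p2 := (hdec (emb g2)).choose with hp2
    obtain ⟨hp1l, _, hp1e⟩ := (hdec (emb g1)).choose_spec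
    obtain ⟨hp2l, _, hp2e⟩ := (hdec (emb g2)).choose_spec
    set l : Fin n → ℤ := p1.1 - p2.1 with hldef
    have hll : l ∈ Λ := Λ.sub_mem hp1l hp2l
    set d : Fin n → ℤ := emb g1 - emb g2 with hddef
    have h22 : p1.2 = p2.2 := heq
    have hdl : d = l := by
      rw [hddef, hldef, hp1e, hp2e, h22]
      abel
    -- bounds on d
    have hg1' : g1 ∈ G := hg1
    have hg2' : g2 ∈ G := hg2
    rw [hGdef, Fintype.mem_piFinset] at hg1' hg2'
    have hg1m : ∀ i : Fin (2 * t), 0 ≤ g1 i ∧ g1 i ≤ km := by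
      intro i
      have := hg1' i
      rw [Finset.mem_Icc] at this
      exact this
    have hg2m : ∀ i : Fin (2 * t), 0 ≤ g2 i ∧ g2 i ≤ km := by
      intro i
      have := hg2' i
      rw [Finset.mem_Icc] at this
      exact this
    have hd1 : ∀ i : Fin n, (i : ℕ) < 2 * t → -km ≤ d i ∧ d i ≤ km := by
      intro i hi
      have h1 := hg1m ⟨i, hi⟩
      have h2 := hg2m ⟨i, hi⟩
      rw [hddef]
      simp only [Pi.sub_apply, hembdef, dif_pos hi]
      omega
    have hd2 : ∀ i : Fin n, ¬ (i : ℕ) < 2 * t → d i = 0 := by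
      intro i hi
      rw [hddef]
      simp only [Pi.sub_apply, hembdef, dif_neg hi]
      omega
    -- split d = b1 - b2 with b1, b2 in the ball
    set b1 : Fin n → ℤ := fun i => if (i : ℕ) < t then d i else 0 with hb1def
    set b2 : Fin n → ℤ := fun i => if (i : ℕ) < t then 0 else -(d i) with hb2def
    have hb1B : b1 ∈ errBall n t kp km := by
      constructor
      · intro i
        simp only [hb1def]
        by_cases hi : (i : ℕ) < t
        · rw [if_pos hi]
          have := hd1 i (by omega)
          omega
        · rw [if_neg hi]; omega
      · have hsub : (univ.filter fun i => b1 i ≠ 0) ⊆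
            (univ.filter fun i : Fin n => (i : ℕ) < t) := by
          intro i hi
          have hne := (Finset.mem_filter.mp hi).2
          refine Finset.mem_filter.mpr ⟨Finset.mem_univ i, ?_⟩
          by_contra hlt
          simp only [hb1def] at hne
          simp only [if_neg hlt] at hne
          exact hne rfl
        exact le_trans (Finset.card_le_card hsub) (card_filter_val_lt n t)
    have hb2B : b2 ∈ errBall n t kp km := by
      constructor
      · intro i
        simp only [hb2def]
        by_cases hi : (i : ℕ) < t
        · rw [if_pos hi]; omega
        · rw [if_neg hi]
          by_cases hi2 : (i : ℕ) < 2 * t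
          · have := hd1 i hi2
            omega
          · have := hd2 i hi2
            omega
      · have hsub : (univ.filter fun i => b2 i ≠ 0) ⊆
            (univ.filter fun i : Fin n => t ≤ (i : ℕ) ∧ (i : ℕ) < 2 * t) := by
          intro i hi
          have hne := (Finset.mem_filter.mp hi).2
          refine Finset.mem_filter.mpr ⟨Finset.mem_univ i, ?_, ?_⟩
          · by_contra hlt
            simp only [hb2def] at hne
            simp only [if_pos (by omega : (i : ℕ) < t)] at hne
            exact hne rfl
          · by_contra hlt
            have hd0 := hd2 i hlt
            simp only [hb2def] at hne
            by_cases hi : (i : ℕ) < t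
            · simp only [if_pos hi] at hne; exact hne rfl
            · simp only [if_neg hi] at hne; omega
        calc (univ.filter fun i => b2 i ≠ 0).card
            ≤ (univ.filter fun i : Fin n => t ≤ (i : ℕ) ∧ (i : ℕ) < 2 * t).card :=
              Finset.card_le_card hsub
          _ ≤ 2 * t - t := card_filter_val_Ico n t (2 * t)
          _ ≤ t := by omega
    have hsplit : b1 = l + b2 := by
      funext i
      rw [← hdl]
      simp only [hb1def, hb2def, Pi.add_apply]
      by_cases hi : (i : ℕ) < t
      · simp [if_pos hi]
      · simp [if_neg hi]
    have hl0 : l = 0 := tiles_lam_zero hT hll hb1B hb2B hsplit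
    have : emb g1 = emb g2 := by
      have := hdl
      rw [hl0] at this
      rw [hddef] at this
      exact sub_eq_zero.mp this
    exact hembinj this
  have hlower : (km + 1).toNat ^ (2 * t) ≤ BF.card := by
    rw [← hGcard]
    exact Finset.card_le_card_of_injOn ψ hψmem hψinj
  ------------------------------------------------------------------
  -- Combine and convert to the real inequality
  ------------------------------------------------------------------
  have hnat : (km + 1).toNat ^ (2 * t) < n.choose t * c ^ t := by omega
  have hreal : ((km : ℝ) + 1) ^ (2 * t) < (n.choose t : ℝ) * ((kp : ℝ) + km + 1) ^ t := by
    have h1 : (((km + 1).toNat : ℤ) : ℝ) = (km : ℝ) + 1 := by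
      rw [Int.toNat_of_nonneg (by omega)]; push_cast; ring
    have h2 : ((c : ℤ) : ℝ) = (kp : ℝ) + km + 1 := by
      rw [hc]; push_cast; ring
    have := (Nat.cast_lt (α := ℝ)).mpr hnat
    push_cast at this
    rw [show ((km + 1).toNat : ℝ) = (km : ℝ) + 1 by exact_mod_cast h1,
      show (c : ℝ) = (kp : ℝ) + km + 1 by exact_mod_cast h2] at this
    exact this
  set a : ℝ := ((km : ℝ) + 1) ^ 2 / ((kp : ℝ) + (km : ℝ) + 1) with hadef
  have hden : (0 : ℝ) < (kp : ℝ) + km + 1 := by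
    have h1 : (0 : ℝ) ≤ (km : ℝ) := by exact_mod_cast hkm
    have h2 : (km : ℝ) ≤ (kp : ℝ) := by exact_mod_cast hkp
    linarith
  have ha : 0 ≤ a := by
    rw [hadef]
    exact div_nonneg (by positivity) (le_of_lt hden)
  have hat : a ^ t < (n.choose t : ℝ) := by
    rw [hadef, div_pow, ← pow_mul, div_lt_iff₀ (by positivity)]
    calc ((km : ℝ) + 1) ^ (2 * t) < (n.choose t : ℝ) * ((kp : ℝ) + km + 1) ^ t := hreal
      _ = (n.choose t : ℝ) * ((kp : ℝ) + km + 1) ^ t := rfl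
  have htR : (0 : ℝ) < (t : ℝ) := by exact_mod_cast ht
  have key : a = (a ^ t) ^ ((1 : ℝ) / (t : ℝ)) := by
    rw [← Real.rpow_natCast a t, ← Real.rpow_mul ha]
    rw [mul_one_div, div_self (ne_of_gt htR), Real.rpow_one]
  calc a = (a ^ t) ^ ((1 : ℝ) / (t : ℝ)) := key
    _ < ((n.choose t : ℝ)) ^ ((1 : ℝ) / (t : ℝ)) :=
        Real.rpow_lt_rpow (by positivity) hat (by positivity)
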